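/- Iteration lemma yielding Hölder-type oscillation decay: Let u : ℝ^N × ℝ → ℝ be a bounded measurable function, let ρ > 0, ω > 0, 1 < p < 2, and suppose there exist constants a, ε* ∈ (0,1) and b, Γ > 1 such that, defining the sequences ρ_n := b^{−n} ρ (ρ₀ = ρ), ω_{n+1} := max{ a ω_n, Γ ρ_n^{ε*} } (ω₀ = ω), c_n := ω_n^{(p−2)/p}, and the cylinders Q_n := Q(ρ_n^p, c_n ρ_n), one has Q_{n+1} ⊆ Q_n and ess osc_{Q_n} u ≤ ω_n for all n = 0,1,2,…. Then there exist constants γ > 1 and α ∈ (0,1), determined a priori only in terms of a, b, Γ, ε*, p, such that for all 0 < r ≤ ρ, setting c₀ = ω^{(p−2)/p}, one has ess osc_{Q(r^p, c₀ r)} u ≤ γ (ω + ρ^{ε*}) (r/ρ)^α. -/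

import Mathlib

open MeasureTheory Metric Set

/-- The standard cylinder `Q(l,ρ) = B_ρ × (-l, 0] ⊆ ℝ^N × ℝ`. -/
def stdCyl (N : ℕ) (l ρ : ℝ) : Set (EuclideanSpace ℝ (Fin N) × ℝ) :=
  ball (0 : EuclideanSpace ℝ (Fin N)) ρ ×ˢ Set.Ioc (-l) 0

/-- Essential oscillation of `u` on `Q` with respect to Lebesgue measure. -/
noncomputable def essOsc {N : ℕ} (u : EuclideanSpace ℝ (Fin N) → ℝ → ℝ)
    (Q : Set (EuclideanSpace ℝ (Fin N) × ℝ)) : ℝ :=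
  essSup (fun q : EuclideanSpace ℝ (Fin N) × ℝ => u q.1 q.2) (volume.restrict Q) -
    essInf (fun q : EuclideanSpace ℝ (Fin N) × ℝ => u q.1 q.2) (volume.restrict Q)

/-- The radii sequence `ρ_n = b^{-n} ρ`. -/
noncomputable def radSeq (b ρ : ℝ) (n : ℕ) : ℝ := b ^ (-(n : ℝ)) * ρ

/-- The oscillation sequence `ω_0 = ω`, `ω_{n+1} = max {a ω_n, Γ ρ_n^{ε*}}`. -/
noncomputable def oscSeq (a Γ ε b ρ ω : ℝ) : ℕ → ℝ
  | 0 => ω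
  | n + 1 => max (a * oscSeq a Γ ε b ρ ω n) (Γ * radSeq b ρ n ^ ε)

lemma essOsc_mono {N : ℕ} {u : EuclideanSpace ℝ (Fin N) → ℝ → ℝ} {B : ℝ}
    (hB : ∀ x t, |u x t| ≤ B) {Q Q' : Set (EuclideanSpace ℝ (Fin N) × ℝ)}
    (hQQ : Q ⊆ Q') (h0 : volume Q ≠ 0) : essOsc u Q ≤ essOsc u Q' := by
  set f : EuclideanSpace ℝ (Fin N) × ℝ → ℝ := fun q => u q.1 q.2 with hf
  have hle : volume.restrict Q ≤ volume.restrict Q' := Measure.restrict_mono hQQ le_rfl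
  have hae : ae (volume.restrict Q) ≤ ae (volume.restrict Q') := ae_mono hle
  have h0' : volume Q' ≠ 0 := fun h => h0 (measure_mono_null hQQ h)
  have hQne : (ae (volume.restrict Q)).NeBot :=
    ae_neBot.2 (by simpa [Measure.restrict_eq_zero] using h0)
  have hQ'ne : (ae (volume.restrict Q')).NeBot :=
    ae_neBot.2 (by simpa [Measure.restrict_eq_zero] using h0')
  have hub : ∀ μ : Measure (EuclideanSpace ℝ (Fin N) × ℝ),
      (ae μ).IsBoundedUnder (· ≤ ·) f :=
    fun μ => Filter.isBoundedUnder_of ⟨B, fun q => (abs_le.1 (hB q.1 q.2)).2⟩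
  have hlb : ∀ μ : Measure (EuclideanSpace ℝ (Fin N) × ℝ),
      (ae μ).IsBoundedUnder (· ≥ ·) f :=
    fun μ => Filter.isBoundedUnder_of ⟨-B, fun q => (abs_le.1 (hB q.1 q.2)).1⟩
  have h1 : essSup f (volume.restrict Q) ≤ essSup f (volume.restrict Q') :=
    Filter.limsup_le_limsup_of_le hae ((hlb _).isCoboundedUnder_le) (hub _)
  have h2 : essInf f (volume.restrict Q') ≤ essInf f (volume.restrict Q) :=
    Filter.liminf_le_liminf_of_le hae (hlb _) ((hub _).isCoboundedUnder_ge)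
  exact sub_le_sub h1 h2

lemma stdCyl_vol_ne_zero {N : ℕ} {l ρ : ℝ} (hl : 0 < l) (hρ : 0 < ρ) :
    volume (stdCyl N l ρ) ≠ 0 := by
  rw [stdCyl, MeasureTheory.Measure.volume_eq_prod, Measure.prod_prod]
  refine mul_ne_zero (measure_ball_pos _ _ hρ).ne' ?_
  rw [Real.volume_Ioc]
  simpa using by linarith

lemma stdCyl_mono {N : ℕ} {l l' ρ ρ' : ℝ} (hl : l ≤ l') (hρ : ρ ≤ ρ') :
    stdCyl N l ρ ⊆ stdCyl N l' ρ' :=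
  Set.prod_mono (ball_subset_ball hρ) (Set.Ioc_subset_Ioc (neg_le_neg hl) le_rfl)

lemma le_rpow_half {x y z : ℝ} (hx : 0 < x) (hy : 0 < y) (h1 : z ≤ x) (h2 : z ≤ y) :
    z ≤ (x * y) ^ ((1:ℝ)/2) := by
  rw [← Real.sqrt_eq_rpow]
  rcases le_total x y with h | h
  · calc z ≤ x := h1
      _ = Real.sqrt x * Real.sqrt x := (Real.mul_self_sqrt hx.le).symm
      _ ≤ Real.sqrt x * Real.sqrt y := by gcongr
      _ = Real.sqrt (x * y) := (Real.sqrt_mul hx.le y).symm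
  · calc z ≤ y := h2
      _ = Real.sqrt y * Real.sqrt y := (Real.mul_self_sqrt hy.le).symm
      _ ≤ Real.sqrt x * Real.sqrt y := by gcongr
      _ = Real.sqrt (x * y) := (Real.sqrt_mul hx.le y).symm

lemma pow_half_pow {L : ℝ} (hL0 : 0 < L) (n : ℕ) :
    (L ^ n) ^ ((1:ℝ)/2) = (L ^ ((1:ℝ)/2)) ^ n := by
  rw [← Real.rpow_natCast L n, ← Real.rpow_natCast (L ^ ((1:ℝ)/2)) n,
    ← Real.rpow_mul hL0.le, ← Real.rpow_mul hL0.le]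
  ring_nf

set_option maxHeartbeats 2000000 in
/-- Iteration lemma yielding Hölder-type decay of the essential oscillation. -/
theorem iteration_lemma_holder_decay
    (a ε' b Γ p : ℝ) (ha : a ∈ Set.Ioo (0:ℝ) 1) (hε' : ε' ∈ Set.Ioo (0:ℝ) 1)
    (hb : 1 < b) (hΓ : 1 < Γ) (hp1 : 1 < p) (hp2 : p < 2) :
    ∃ γ : ℝ, 1 < γ ∧ ∃ α ∈ Set.Ioo (0:ℝ) 1,
      ∀ (N : ℕ), 1 ≤ N →
      ∀ (u : EuclideanSpace ℝ (Fin N) → ℝ → ℝ),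
        Measurable (fun q : EuclideanSpace ℝ (Fin N) × ℝ => u q.1 q.2) →
        (∃ B : ℝ, ∀ x t, |u x t| ≤ B) →
      ∀ (ρ ω : ℝ), 0 < ρ → 0 < ω →
        (∀ n : ℕ,
          stdCyl N (radSeq b ρ (n + 1) ^ p)
            (oscSeq a Γ ε' b ρ ω (n + 1) ^ ((p - 2) / p) * radSeq b ρ (n + 1)) ⊆
          stdCyl N (radSeq b ρ n ^ p)
            (oscSeq a Γ ε' b ρ ω n ^ ((p - 2) / p) * radSeq b ρ n)) →
        (∀ n : ℕ,
          essOsc u (stdCyl N (radSeq b ρ n ^ p)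
            (oscSeq a Γ ε' b ρ ω n ^ ((p - 2) / p) * radSeq b ρ n)) ≤
          oscSeq a Γ ε' b ρ ω n) →
      ∀ r : ℝ, 0 < r → r ≤ ρ →
        essOsc u (stdCyl N (r ^ p) (ω ^ ((p - 2) / p) * r)) ≤
          γ * (ω + ρ ^ ε') * (r / ρ) ^ α := by
  classical
  obtain ⟨ha0, ha1⟩ := ha
  obtain ⟨hε0, hε1⟩ := hε'
  have hb0 : (0:ℝ) < b := lt_trans one_pos hb
  set L : ℝ := max a (b ^ (-ε')) with hLdef
  have hbε : b ^ (-ε') < 1 := Real.rpow_lt_one_of_one_lt_of_neg hb (by linarith)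
  have hL0 : 0 < L := lt_of_lt_of_le ha0 (le_max_left _ _)
  have hL1 : L < 1 := max_lt ha1 hbε
  have haL : a ≤ L := le_max_left _ _
  have hbL : b ^ (-ε') ≤ L := le_max_right _ _
  set C : ℝ := Γ / L with hCdef
  have hC1 : 1 < C := (one_lt_div hL0).2 (lt_trans hL1 hΓ)
  have hC0 : 0 < C := lt_trans one_pos hC1
  have hΓC : Γ = C * L := by rw [hCdef, div_mul_cancel₀ Γ hL0.ne']
  have hlogb : 0 < Real.log b := Real.log_pos hb
  have hlogL : 0 < Real.log (1/L) := Real.log_pos (one_lt_one_div hL0 hL1)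
  set α : ℝ := min (Real.log (1/L) / (2 * Real.log b)) (1/2 : ℝ) with hαdef
  have hα0 : 0 < α := lt_min (by positivity) (by norm_num)
  have hα2 : α ≤ 1/2 := min_le_right _ _
  have hα1 : α < 1 := lt_of_le_of_lt hα2 (by norm_num)
  have hbα1 : (1:ℝ) ≤ b ^ α := Real.one_le_rpow hb.le hα0.le
  have hbαL : b ^ α ≤ (1/L) ^ ((1:ℝ)/2) := by
    have h1 : b ^ α ≤ b ^ (Real.log (1/L) / (2 * Real.log b)) :=
      Real.rpow_le_rpow_of_exponent_le hb.le (min_le_left _ _)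
    have h2 : b ^ (Real.log (1/L) / (2 * Real.log b)) = (1/L) ^ ((1:ℝ)/2) := by
      rw [Real.rpow_def_of_pos hb0, Real.rpow_def_of_pos (by positivity : (0:ℝ) < 1/L)]
      congr 1
      field_simp
    rw [← h2]; exact h1
  have hkey : L ^ ((1:ℝ)/2) * b ^ α ≤ 1 := by
    calc L ^ ((1:ℝ)/2) * b ^ α ≤ L ^ ((1:ℝ)/2) * (1/L) ^ ((1:ℝ)/2) := by
          exact mul_le_mul_of_nonneg_left hbαL (Real.rpow_nonneg hL0.le _)
      _ = (L * (1/L)) ^ ((1:ℝ)/2) := (Real.mul_rpow hL0.le (by positivity)).symm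
      _ = 1 := by rw [mul_one_div_cancel hL0.ne', Real.one_rpow]
  have hLhalf : L ≤ L ^ ((1:ℝ)/2) := by
    nth_rewrite 1 [← Real.rpow_one L]
    exact Real.rpow_le_rpow_of_exponent_ge hL0 hL1.le (by norm_num)
  have hkey' : L * b ^ α ≤ 1 :=
    le_trans (mul_le_mul_of_nonneg_right hLhalf (by positivity)) hkey
  have hCbα : 0 < C * b ^ α := mul_pos hC0 (lt_of_lt_of_le one_pos hbα1)
  refine ⟨C * b ^ α + 1, by linarith, α, ⟨hα0, hα1⟩, ?_⟩
  intro N hN u hu hBdd ρ ω hρ hω hsub hosc r hr hrρ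
  obtain ⟨B, hB⟩ := hBdd
  have hp0 : 0 < p := by linarith
  set q : ℝ := (p - 2) / p with hq
  set θ : ℝ := (2 - p) / p with hθ
  have hθ0 : 0 < θ := div_pos (by linarith) hp0
  have hθ1 : θ ≤ 1 := by rw [hθ, div_le_one hp0]; linarith
  have hqθ : q = -θ := by rw [hq, hθ]; ring
  set Ω : ℝ := ω + ρ ^ ε' with hΩdef
  have hΩ0 : 0 < Ω := by positivity
  have hωΩ : ω ≤ Ω := le_add_of_nonneg_right (by positivity)
  have hρΩ : ρ ^ ε' ≤ Ω := le_add_of_nonneg_left hω.le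
  set W : ℕ → ℝ := oscSeq a Γ ε' b ρ ω with hWdef
  set R : ℕ → ℝ := radSeq b ρ with hRdef
  have hWs : ∀ n, W (n+1) = max (a * W n) (Γ * R n ^ ε') := fun n => rfl
  have hW00 : W 0 = ω := rfl
  have hR0 : ∀ n, 0 < R n := fun n => mul_pos (Real.rpow_pos_of_pos hb0 _) hρ
  have hRρ : R 0 = ρ := by simp [hRdef, radSeq]
  have hW0 : ∀ n, 0 < W n := by
    intro n
    induction n with
    | zero => exact hω
    | succ n ih =>
      rw [hWs n]
      exact lt_of_lt_of_le (mul_pos ha0 ih) (le_max_left _ _)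
  have hRe : ∀ n : ℕ, R n ^ ε' = (b ^ (-ε')) ^ n * ρ ^ ε' := by
    intro n
    rw [hRdef]
    show (b ^ (-(n:ℝ)) * ρ) ^ ε' = _
    rw [Real.mul_rpow (Real.rpow_nonneg hb0.le _) hρ.le, ← Real.rpow_natCast (b ^ (-ε')) n,
      ← Real.rpow_mul hb0.le, ← Real.rpow_mul hb0.le]
    ring_nf
  have hRn : ∀ n : ℕ, R n = b ^ (-(n:ℝ)) * ρ := fun n => rfl
  have hF2 : ∀ n, W n ≤ C * Ω * L ^ n := by
    intro n
    induction n with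
    | zero =>
      rw [hW00, pow_zero, mul_one]
      calc ω ≤ Ω := hωΩ
        _ = 1 * Ω := (one_mul Ω).symm
        _ ≤ C * Ω := mul_le_mul_of_nonneg_right hC1.le hΩ0.le
    | succ n ih =>
      rw [hWs n]
      have hLn : (0:ℝ) < L ^ n := by positivity
      apply max_le
      · calc a * W n ≤ L * (C * Ω * L ^ n) := by
              apply mul_le_mul haL ih (hW0 n).le hL0.le
          _ = C * Ω * L ^ (n+1) := by ring
      · rw [hRe n, hΓC]
        have h1 : (b ^ (-ε')) ^ n ≤ L ^ n := pow_le_pow_left₀ (Real.rpow_nonneg hb0.le _) hbL n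
        calc C * L * ((b ^ (-ε')) ^ n * ρ ^ ε') ≤ C * L * (L ^ n * Ω) := by
              apply mul_le_mul_of_nonneg_left _ (by positivity)
              apply mul_le_mul h1 hρΩ (by positivity) hLn.le
          _ = C * Ω * L ^ (n+1) := by ring
  -- the containment predicate and the maximal index
  have hPfail : ∃ n, ¬ (r ≤ R n ∧ ω ^ q * r ≤ W n ^ q * R n) := by
    obtain ⟨n, hn⟩ := exists_pow_lt_of_lt_one (div_pos hr hρ)
      (show b⁻¹ < 1 by rw [inv_lt_one_iff₀]; right; exact hb)
    refine ⟨n, fun hc => ?_⟩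
    have hinv : R n = b⁻¹ ^ n * ρ := by
      rw [hRn n, Real.rpow_neg hb0.le, Real.rpow_natCast, inv_pow]
    have : R n < r := by
      rw [hinv]
      calc b⁻¹ ^ n * ρ < (r / ρ) * ρ := by
            exact mul_lt_mul_of_pos_right hn hρ
        _ = r := div_mul_cancel₀ r hρ.ne'
    linarith [hc.1]
  obtain ⟨n, hmn⟩ : ∃ n, Nat.find hPfail = n + 1 := by
    refine ⟨Nat.find hPfail - 1, (Nat.succ_pred_eq_of_ne_zero ?_).symm⟩
    intro h0
    apply Nat.find_spec hPfail
    rw [h0, hRρ, hW00]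
    exact ⟨hrρ, mul_le_mul_of_nonneg_left hrρ (Real.rpow_nonneg hω.le q)⟩
  have hPn : r ≤ R n ∧ ω ^ q * r ≤ W n ^ q * R n := by
    by_contra hc
    exact Nat.find_min hPfail (by omega) hc
  have hfail : ¬ (r ≤ R (n+1) ∧ ω ^ q * r ≤ W (n+1) ^ q * R (n+1)) := by
    rw [← hmn]; exact Nat.find_spec hPfail
  clear hmn hPfail
  -- essential oscillation bounds
  have hvol : volume (stdCyl N (r ^ p) (ω ^ q * r)) ≠ 0 :=
    stdCyl_vol_ne_zero (Real.rpow_pos_of_pos hr p)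
      (mul_pos (Real.rpow_pos_of_pos hω q) hr)
  have hOsc_le : ∀ k, r ≤ R k → ω ^ q * r ≤ W k ^ q * R k →
      essOsc u (stdCyl N (r ^ p) (ω ^ q * r)) ≤ W k := by
    intro k h1 h2
    refine le_trans (essOsc_mono hB ?_ hvol) (hosc k)
    exact stdCyl_mono (Real.rpow_le_rpow hr.le h1 hp0.le) h2
  have hOsc0 : essOsc u (stdCyl N (r ^ p) (ω ^ q * r)) ≤ ω := by
    have := hOsc_le 0 (by rw [hRρ]; exact hrρ)
      (by rw [hRρ, hW00]; exact mul_le_mul_of_nonneg_left hrρ (Real.rpow_nonneg hω.le q))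
    rwa [hW00] at this
  have hOscn : essOsc u (stdCyl N (r ^ p) (ω ^ q * r)) ≤ W n := hOsc_le n hPn.1 hPn.2
  set s : ℝ := r / ρ with hsdef
  have hs0 : 0 < s := div_pos hr hρ
  -- auxiliary powers of b
  have hbsplit : ∀ c : ℝ, b ^ (c * ((n:ℝ)+1)) = (b ^ c) ^ n * b ^ c := by
    intro c
    rw [← Real.rpow_natCast (b ^ c) n, ← Real.rpow_mul hb0.le, ← Real.rpow_add hb0]
    ring_nf
  have hbpos : ∀ x : ℝ, 0 < b ^ x := fun x => Real.rpow_pos_of_pos hb0 x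
  rcases not_and_or.mp hfail with hcase | hcase
  · -- case (a): r > ρ_{n+1}
    push_neg at hcase
    have hsl : b ^ (-((n:ℝ)+1)) < s := by
      have he : R (n+1) = b ^ (-((n:ℝ)+1)) * ρ := by
        rw [hRn (n+1)]; push_cast; ring_nf
      rw [he] at hcase
      rw [hsdef, lt_div_iff₀ hρ]
      linarith
    have hsα : b ^ ((-((n:ℝ)+1)) * α) ≤ s ^ α := by
      rw [Real.rpow_mul hb0.le]
      exact Real.rpow_le_rpow (Real.rpow_nonneg hb0.le _) hsl.le hα0.le
    have hkey2 : C * L ^ n * b ^ (α * ((n:ℝ)+1)) ≤ C * b ^ α := by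
      rw [hbsplit α]
      have h1 : (L * b ^ α) ^ n ≤ 1 := pow_le_one₀ (by positivity) hkey'
      calc C * L ^ n * ((b ^ α) ^ n * b ^ α) = (C * b ^ α) * (L * b ^ α) ^ n := by
            rw [mul_pow]; ring
        _ ≤ (C * b ^ α) * 1 := by
            exact mul_le_mul_of_nonneg_left h1 (by positivity)
        _ = C * b ^ α := mul_one _
    have h3 : C * L ^ n ≤ (C * b ^ α) * b ^ ((-((n:ℝ)+1)) * α) := by
      rw [show (-((n:ℝ)+1)) * α = -(α * ((n:ℝ)+1)) by ring, Real.rpow_neg hb0.le,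
        ← div_eq_mul_inv, le_div_iff₀ (hbpos _)]
      exact hkey2
    calc essOsc u (stdCyl N (r ^ p) (ω ^ q * r)) ≤ C * Ω * L ^ n :=
          le_trans hOscn (hF2 n)
      _ = (C * L ^ n) * Ω := by ring
      _ ≤ ((C * b ^ α) * b ^ ((-((n:ℝ)+1)) * α)) * Ω := by
          exact mul_le_mul_of_nonneg_right h3 hΩ0.le
      _ ≤ ((C * b ^ α) * s ^ α) * Ω := by
          apply mul_le_mul_of_nonneg_right _ hΩ0.le
          exact mul_le_mul_of_nonneg_left hsα (by positivity)
      _ = (C * b ^ α) * (Ω * s ^ α) := by ring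
      _ ≤ (C * b ^ α + 1) * (Ω * s ^ α) :=
          mul_le_mul_of_nonneg_right (by linarith)
            (mul_nonneg hΩ0.le (Real.rpow_nonneg hs0.le α))
      _ = (C * b ^ α + 1) * Ω * s ^ α := by ring
  · -- case (b)
    rw [not_le] at hcase
    set e : ℝ := θ * α with hedef
    have he0 : 0 < e := mul_pos hθ0 hα0
    have he2 : e ≤ 1/2 := le_trans (mul_le_of_le_one_left hα0.le hθ1) hα2
    have hWn1 : W (n+1) ≤ C * Ω := by
      refine le_trans (hF2 (n+1)) ?_
      have h1 : L ^ (n+1) ≤ 1 := pow_le_one₀ hL0.le hL1.le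
      calc C * Ω * L ^ (n+1) ≤ C * Ω * 1 :=
            mul_le_mul_of_nonneg_left h1 (by positivity)
        _ = C * Ω := mul_one _
    have hCΩ0 : (0:ℝ) < C * Ω := mul_pos hC0 hΩ0
    -- lower bound for s
    have hsb : (ω / (C * Ω)) ^ θ * b ^ (-((n:ℝ)+1)) ≤ s := by
      have he : R (n+1) = b ^ (-((n:ℝ)+1)) * ρ := by
        rw [hRn (n+1)]; push_cast; ring_nf
      rw [he] at hcase
      have hωq : 0 < ω ^ q := Real.rpow_pos_of_pos hω q
      have hWq : 0 < W (n+1) ^ q := Real.rpow_pos_of_pos (hW0 (n+1)) q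
      have e2 : W (n+1) ^ q / ω ^ q * b ^ (-((n:ℝ)+1)) < s := by
        rw [hsdef, lt_div_iff₀ hρ, div_mul_eq_mul_div, div_mul_eq_mul_div, div_lt_iff₀ hωq]
        linarith [hcase]
      have e3 : (ω / W (n+1)) ^ θ = W (n+1) ^ q / ω ^ q := by
        rw [hqθ, Real.rpow_neg (hW0 (n+1)).le, Real.rpow_neg hω.le,
          Real.div_rpow hω.le (hW0 (n+1)).le, inv_div_inv]
      have e4 : (ω / (C * Ω)) ^ θ ≤ (ω / W (n+1)) ^ θ := by
        apply Real.rpow_le_rpow (by positivity) _ hθ0.le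
        gcongr
        exact hW0 (n+1)
      calc (ω / (C * Ω)) ^ θ * b ^ (-((n:ℝ)+1))
          ≤ (ω / W (n+1)) ^ θ * b ^ (-((n:ℝ)+1)) :=
            mul_le_mul_of_nonneg_right e4 (hbpos _).le
        _ = W (n+1) ^ q / ω ^ q * b ^ (-((n:ℝ)+1)) := by rw [e3]
        _ ≤ s := e2.le
    have hsα : ((ω / (C * Ω)) ^ θ * b ^ (-((n:ℝ)+1))) ^ α ≤ s ^ α :=
      Real.rpow_le_rpow (by positivity) hsb hα0.le
    -- main quantities
    set A : ℝ := C ^ ((1:ℝ)/2) * (L ^ ((1:ℝ)/2)) ^ n with hAdef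
    set T : ℝ := ω ^ e * Ω ^ ((1:ℝ) - e) with hTdef
    have hT0 : 0 < T := by positivity
    have hA0 : 0 < A := by positivity
    -- step 1 : (ω * C * Ω * L^n)^{1/2} ≤ A * T
    have hD1 : (ω * C * Ω * L ^ n) ^ ((1:ℝ)/2)
        = ω ^ ((1:ℝ)/2) * C ^ ((1:ℝ)/2) * Ω ^ ((1:ℝ)/2) * (L ^ ((1:ℝ)/2)) ^ n := by
      rw [Real.mul_rpow (by positivity) (by positivity),
        Real.mul_rpow (by positivity) hΩ0.le,
        Real.mul_rpow hω.le hC0.le, pow_half_pow hL0]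
    have hω12 : ω ^ ((1:ℝ)/2) = ω ^ e * ω ^ ((1:ℝ)/2 - e) := by
      rw [← Real.rpow_add hω]; ring_nf
    have hΩsplit : Ω ^ ((1:ℝ)/2 - e) * Ω ^ ((1:ℝ)/2) = Ω ^ ((1:ℝ) - e) := by
      rw [← Real.rpow_add hΩ0]; ring_nf
    have step1 : (ω * C * Ω * L ^ n) ^ ((1:ℝ)/2) ≤ A * T := by
      rw [hD1, hω12]
      have hωe : ω ^ ((1:ℝ)/2 - e) ≤ Ω ^ ((1:ℝ)/2 - e) :=
        Real.rpow_le_rpow hω.le hωΩ (by linarith)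
      calc ω ^ e * ω ^ ((1:ℝ)/2 - e) * C ^ ((1:ℝ)/2) * Ω ^ ((1:ℝ)/2) * (L ^ ((1:ℝ)/2)) ^ n
          ≤ ω ^ e * Ω ^ ((1:ℝ)/2 - e) * C ^ ((1:ℝ)/2) * Ω ^ ((1:ℝ)/2) * (L ^ ((1:ℝ)/2)) ^ n := by
            have h9 : (0:ℝ) ≤ C ^ ((1:ℝ)/2) * Ω ^ ((1:ℝ)/2) * (L ^ ((1:ℝ)/2)) ^ n := by positivity
            have h8 := mul_le_mul_of_nonneg_left hωe (Real.rpow_nonneg hω.le e)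
            have h10 := mul_le_mul_of_nonneg_right h8 h9
            linarith [h10]
        _ = A * (ω ^ e * (Ω ^ ((1:ℝ)/2 - e) * Ω ^ ((1:ℝ)/2))) := by rw [hAdef]; ring
        _ = A * T := by rw [hΩsplit]
    -- step 2 : key constant bound
    have step2 : A * (C ^ e * b ^ (α * ((n:ℝ)+1))) ≤ C * b ^ α + 1 := by
      have hCe : C ^ ((1:ℝ)/2) * C ^ e = C ^ ((1:ℝ)/2 + e) := (Real.rpow_add hC0 _ _).symm
      have hC12e : C ^ ((1:ℝ)/2 + e) ≤ C := by
        nth_rewrite 2 [← Real.rpow_one C]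
        exact Real.rpow_le_rpow_of_exponent_le hC1.le (by linarith)
      have h1 : (L ^ ((1:ℝ)/2) * b ^ α) ^ n ≤ 1 := pow_le_one₀ (by positivity) hkey
      calc A * (C ^ e * b ^ (α * ((n:ℝ)+1)))
          = (C ^ ((1:ℝ)/2) * C ^ e) * (L ^ ((1:ℝ)/2) * b ^ α) ^ n * b ^ α := by
            rw [hbsplit α, mul_pow, hAdef]; ring
        _ = C ^ ((1:ℝ)/2 + e) * (L ^ ((1:ℝ)/2) * b ^ α) ^ n * b ^ α := by rw [hCe]
        _ ≤ C * 1 * b ^ α := by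
            apply mul_le_mul_of_nonneg_right _ (hbpos α).le
            exact mul_le_mul hC12e h1 (by positivity) hC0.le
        _ ≤ C * b ^ α + 1 := by rw [mul_one]; linarith
    -- identity for the right-hand side
    have hCene : C ^ e ≠ 0 := (Real.rpow_pos_of_pos hC0 e).ne'
    have hΩene : Ω ^ e ≠ 0 := (Real.rpow_pos_of_pos hΩ0 e).ne'
    have hbne : b ^ (α * ((n:ℝ)+1)) ≠ 0 := (hbpos _).ne'
    have hident : Ω * ((ω / (C * Ω)) ^ θ * b ^ (-((n:ℝ)+1))) ^ α
        = T / (C ^ e * b ^ (α * ((n:ℝ)+1))) := by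
      rw [Real.mul_rpow (by positivity) (hbpos _).le,
        ← Real.rpow_mul (show (0:ℝ) ≤ ω / (C * Ω) by positivity) θ α,
        ← Real.rpow_mul hb0.le (-((n:ℝ)+1)) α, ← hedef,
        Real.div_rpow hω.le hCΩ0.le, Real.mul_rpow hC0.le hΩ0.le, hTdef,
        show ((1:ℝ) - e) = 1 - e from rfl, Real.rpow_sub hΩ0, Real.rpow_one,
        show (-((n:ℝ)+1)) * α = -(α * ((n:ℝ)+1)) by ring, Real.rpow_neg hb0.le]
      field_simp
    -- assemble
    have hWb : (ω * W n) ^ ((1:ℝ)/2) ≤ (ω * C * Ω * L ^ n) ^ ((1:ℝ)/2) := by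
      apply Real.rpow_le_rpow (mul_pos hω (hW0 n)).le _ (by norm_num)
      calc ω * W n ≤ ω * (C * Ω * L ^ n) :=
            mul_le_mul_of_nonneg_left (hF2 n) hω.le
        _ = ω * C * Ω * L ^ n := by ring
    have hstep : A * T ≤ (C * b ^ α + 1) * T / (C ^ e * b ^ (α * ((n:ℝ)+1))) := by
      rw [le_div_iff₀ (by positivity)]
      calc A * T * (C ^ e * b ^ (α * ((n:ℝ)+1)))
          = (A * (C ^ e * b ^ (α * ((n:ℝ)+1)))) * T := by ring
        _ ≤ (C * b ^ α + 1) * T := mul_le_mul_of_nonneg_right step2 hT0.le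
    calc essOsc u (stdCyl N (r ^ p) (ω ^ q * r))
        ≤ (ω * W n) ^ ((1:ℝ)/2) := le_rpow_half hω (hW0 n) hOsc0 hOscn
      _ ≤ (ω * C * Ω * L ^ n) ^ ((1:ℝ)/2) := hWb
      _ ≤ A * T := step1
      _ ≤ (C * b ^ α + 1) * T / (C ^ e * b ^ (α * ((n:ℝ)+1))) := hstep
      _ = (C * b ^ α + 1) * (T / (C ^ e * b ^ (α * ((n:ℝ)+1)))) := by ring
      _ = (C * b ^ α + 1) * (Ω * ((ω / (C * Ω)) ^ θ * b ^ (-((n:ℝ)+1))) ^ α) := by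
          rw [hident]
      _ ≤ (C * b ^ α + 1) * (Ω * s ^ α) := by
          apply mul_le_mul_of_nonneg_left _ (by positivity)
          exact mul_le_mul_of_nonneg_left hsα hΩ0.le
      _ = (C * b ^ α + 1) * Ω * s ^ α := by ring
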